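/- Let G = (V, E) be a finite simple graph, let x be a fractional matching of G, let e₀ ∈ E, and let x̄ : E → ℝ agree with x on E ∖ {e₀} and satisfy x̄_{e₀} = 0. Let α be a real number with 0 < α ≤ 1/(2 − x_{e₀}). If α·x̄ lies in the matching polytope of G, then α·x lies in the matching polytope of G. -/

import Mathlib

open Finset

theorem matching_iterative_packing_step
    {V : Type*} [Fintype V] [DecidableEq V]
    (G : SimpleGraph V) [DecidableRel G.Adj]
    (x : {e : Sym2 V // e ∈ G.edgeFinset} → ℝ)
    (hx0 : ∀ e, 0 ≤ x e) (hx1 : ∀ e, x e ≤ 1)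
    (hxdeg : ∀ w : V,
      ∑ e : {e : Sym2 V // e ∈ G.edgeFinset}, (if w ∈ e.1 then x e else 0) ≤ 1)
    (e₀ : {e : Sym2 V // e ∈ G.edgeFinset})
    (xbar : {e : Sym2 V // e ∈ G.edgeFinset} → ℝ)
    (hxbar : ∀ e, e ≠ e₀ → xbar e = x e) (hxbar0 : xbar e₀ = 0)
    (α : ℝ) (hα0 : 0 < α) (hα1 : α ≤ 1 / (2 - x e₀))
    (hhull : (fun e => α * xbar e) ∈
      convexHull ℝ {χ : {e : Sym2 V // e ∈ G.edgeFinset} → ℝ |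
        ∃ M : Finset (Sym2 V), M ⊆ G.edgeFinset ∧
          (∀ e ∈ M, ∀ f ∈ M, e ≠ f → ∀ w : V, w ∈ e → w ∉ f) ∧
          χ = fun e => if e.1 ∈ M then 1 else 0}) :
    (fun e => α * x e) ∈
      convexHull ℝ {χ : {e : Sym2 V // e ∈ G.edgeFinset} → ℝ |
        ∃ M : Finset (Sym2 V), M ⊆ G.edgeFinset ∧
          (∀ e ∈ M, ∀ f ∈ M, e ≠ f → ∀ w : V, w ∈ e → w ∉ f) ∧
          χ = fun e => if e.1 ∈ M then 1 else 0} := by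
  classical
  rw [_root_.convexHull_eq] at hhull
  obtain ⟨ι, t, w, z, hw0, hw1, hzs, hcm⟩ := hhull
  simp only [Set.mem_setOf_eq] at hzs
  choose! M hMsub hMmatch hMind using hzs
  have hzval : ∀ i ∈ t, ∀ e, z i e = if e.1 ∈ M i then 1 else 0 := by
    intro i hi e; rw [hMind i hi]
  have hz0 : ∀ i ∈ t, ∀ e, 0 ≤ z i e := by
    intro i hi e; rw [hzval i hi]; split_ifs <;> norm_num
  -- endpoints of e₀
  obtain ⟨u, v, huv⟩ : ∃ u v, e₀.1 = s(u, v) := Sym2.ind (fun a b => ⟨a, b, rfl⟩) e₀.1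
  have hu : u ∈ e₀.1 := by rw [huv]; exact Sym2.mem_mk_left u v
  have hv : v ∈ e₀.1 := by rw [huv]; exact Sym2.mem_mk_right u v
  -- componentwise value of the convex combination
  have hwz : ∀ e, ∑ i ∈ t, w i * z i e = α * xbar e := by
    intro e
    have h := congrFun ((t.centerMass_eq_of_sum_1 z hw1).symm.trans hcm) e
    simpa only [Finset.sum_apply, Pi.smul_apply, smul_eq_mul] using h
  -- xbar degree sums
  have hbarsum : ∀ a : V, a ∈ e₀.1 →
      ∑ e : {e : Sym2 V // e ∈ G.edgeFinset}, (if a ∈ e.1 then xbar e else 0)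
        = (∑ e : {e : Sym2 V // e ∈ G.edgeFinset}, (if a ∈ e.1 then x e else 0)) - x e₀ := by
    intro a ha
    have hdiff : ∑ e : {e : Sym2 V // e ∈ G.edgeFinset},
        ((if a ∈ e.1 then xbar e else 0) - (if a ∈ e.1 then x e else 0)) = - x e₀ := by
      rw [Finset.sum_eq_single e₀]
      · simp [ha, hxbar0]
      · intro b _ hb; rw [hxbar b hb]; simp
      · simp
    have h2 := Finset.sum_sub_distrib (s := (univ : Finset {e : Sym2 V // e ∈ G.edgeFinset}))
      (f := fun e => if a ∈ e.1 then xbar e else 0) (g := fun e => if a ∈ e.1 then x e else 0)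
    linarith [hdiff, h2]
  -- weight of matchings covering a vertex of e₀
  have hcover : ∀ a : V, a ∈ e₀.1 →
      ∑ i ∈ t, w i * (∑ e : {e : Sym2 V // e ∈ G.edgeFinset}, if a ∈ e.1 then z i e else 0)
        ≤ α * (1 - x e₀) := by
    intro a ha
    calc ∑ i ∈ t, w i * (∑ e : {e : Sym2 V // e ∈ G.edgeFinset}, if a ∈ e.1 then z i e else 0)
        = ∑ i ∈ t, ∑ e : {e : Sym2 V // e ∈ G.edgeFinset},
            (if a ∈ e.1 then w i * z i e else 0) := by
          refine Finset.sum_congr rfl fun i _ => ?_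
          rw [Finset.mul_sum]
          exact Finset.sum_congr rfl fun e _ => by rw [mul_ite, mul_zero]
      _ = ∑ e : {e : Sym2 V // e ∈ G.edgeFinset}, ∑ i ∈ t,
            (if a ∈ e.1 then w i * z i e else 0) := Finset.sum_comm
      _ = ∑ e : {e : Sym2 V // e ∈ G.edgeFinset},
            (if a ∈ e.1 then α * xbar e else 0) := by
          refine Finset.sum_congr rfl fun e _ => ?_
          split_ifs with h
          · exact hwz e
          · simp
      _ = α * ∑ e : {e : Sym2 V // e ∈ G.edgeFinset}, (if a ∈ e.1 then xbar e else 0) := by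
          rw [Finset.mul_sum]
          exact Finset.sum_congr rfl fun e _ => by rw [mul_ite, mul_zero]
      _ = α * ((∑ e : {e : Sym2 V // e ∈ G.edgeFinset}, (if a ∈ e.1 then x e else 0)) - x e₀) := by
          rw [hbarsum a ha]
      _ ≤ α * (1 - x e₀) := by
          have := hxdeg a
          have h2 : (∑ e : {e : Sym2 V // e ∈ G.edgeFinset}, (if a ∈ e.1 then x e else 0)) - x e₀
              ≤ 1 - x e₀ := by linarith
          exact mul_le_mul_of_nonneg_left h2 hα0.le
  -- the set of good (avoiding) indices
  set S : Finset ι := t.filter (fun i => ∀ a ∈ e₀.1, ∀ f ∈ M i, a ∉ f) with hSdef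
  have hSsub : S ⊆ t := Finset.filter_subset _ _
  have hnonneg : ∀ i ∈ t, ∀ b : V, 0 ≤ ∑ e : {e : Sym2 V // e ∈ G.edgeFinset},
      (if b ∈ e.1 then z i e else 0) := by
    intro i hit b
    refine Finset.sum_nonneg fun e _ => ?_
    split_ifs
    · exact hz0 i hit e
    · exact le_rfl
  -- matchings not avoiding e₀ cover u or v
  have hAB : ∀ i ∈ t \ S, (1:ℝ) ≤
      (∑ e : {e : Sym2 V // e ∈ G.edgeFinset}, if u ∈ e.1 then z i e else 0)
      + (∑ e : {e : Sym2 V // e ∈ G.edgeFinset}, if v ∈ e.1 then z i e else 0) := by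
    intro i hi
    obtain ⟨hit, hiS⟩ := Finset.mem_sdiff.mp hi
    have hnP : ¬ (∀ a ∈ e₀.1, ∀ f ∈ M i, a ∉ f) := by
      intro hP; exact hiS (Finset.mem_filter.mpr ⟨hit, hP⟩)
    push_neg at hnP
    obtain ⟨a, ha, f, hf, haf⟩ := hnP
    have hfe : f ∈ G.edgeFinset := hMsub i hit hf
    have hterm : ∀ b : V, b ∈ f → (1:ℝ) ≤ ∑ e : {e : Sym2 V // e ∈ G.edgeFinset},
        (if b ∈ e.1 then z i e else 0) := by
      intro b hb
      have heq : (if b ∈ (⟨f, hfe⟩ : {e : Sym2 V // e ∈ G.edgeFinset}).1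
          then z i ⟨f, hfe⟩ else 0) = 1 := by
        rw [if_pos hb, hzval i hit]
        exact if_pos hf
      calc (1:ℝ) = _ := heq.symm
        _ ≤ _ := Finset.single_le_sum (f := fun e : {e : Sym2 V // e ∈ G.edgeFinset} =>
            if b ∈ e.1 then z i e else 0)
            (fun e _ => by split_ifs; exacts [hz0 i hit e, le_rfl]) (mem_univ _)
    rw [huv] at ha
    rcases Sym2.mem_iff.mp ha with rfl | rfl
    · linarith [hterm a haf, hnonneg i hit v]
    · linarith [hterm a haf, hnonneg i hit u]
  -- bound the bad weight
  have hbad : ∑ i ∈ t \ S, w i ≤ α * (1 - x e₀) + α * (1 - x e₀) := by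
    calc ∑ i ∈ t \ S, w i
        ≤ ∑ i ∈ t \ S, w i *
            ((∑ e : {e : Sym2 V // e ∈ G.edgeFinset}, if u ∈ e.1 then z i e else 0)
            + (∑ e : {e : Sym2 V // e ∈ G.edgeFinset}, if v ∈ e.1 then z i e else 0)) := by
          refine Finset.sum_le_sum fun i hi => ?_
          exact le_mul_of_one_le_right (hw0 i (Finset.mem_sdiff.mp hi).1) (hAB i hi)
      _ ≤ ∑ i ∈ t, w i *
            ((∑ e : {e : Sym2 V // e ∈ G.edgeFinset}, if u ∈ e.1 then z i e else 0)
            + (∑ e : {e : Sym2 V // e ∈ G.edgeFinset}, if v ∈ e.1 then z i e else 0)) := by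
          refine Finset.sum_le_sum_of_subset_of_nonneg Finset.sdiff_subset fun i hi _ => ?_
          exact mul_nonneg (hw0 i hi) (by linarith [hnonneg i hi u, hnonneg i hi v])
      _ = (∑ i ∈ t, w i *
            (∑ e : {e : Sym2 V // e ∈ G.edgeFinset}, if u ∈ e.1 then z i e else 0))
          + ∑ i ∈ t, w i *
            (∑ e : {e : Sym2 V // e ∈ G.edgeFinset}, if v ∈ e.1 then z i e else 0) := by
          rw [← Finset.sum_add_distrib]
          exact Finset.sum_congr rfl fun i _ => by ring
      _ ≤ α * (1 - x e₀) + α * (1 - x e₀) := add_le_add (hcover u hu) (hcover v hv)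
  set T : ℝ := ∑ i ∈ S, w i with hTdef
  have hsplitsum : (∑ i ∈ t \ S, w i) + T = 1 := by
    rw [hTdef, Finset.sum_sdiff hSsub, hw1]
  set β : ℝ := α * x e₀ with hβdef
  have hβ0 : 0 ≤ β := mul_nonneg hα0.le (hx0 e₀)
  have hβT : β ≤ T := by
    have h2 : (0:ℝ) < 2 - x e₀ := by linarith [hx1 e₀]
    have hα2 : α * (2 - x e₀) ≤ 1 := (le_div_iff₀ h2).mp hα1
    nlinarith [hbad, hsplitsum]
  have hT0 : 0 ≤ T := Finset.sum_nonneg fun i hi => hw0 i (hSsub hi)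
  -- split off β of the good weight
  set c : ℝ := if T = 0 then 0 else β / T with hcdef
  have hc0 : 0 ≤ c := by
    rw [hcdef]; split_ifs with h
    · exact le_rfl
    · exact div_nonneg hβ0 hT0
  have hc1 : c ≤ 1 := by
    rw [hcdef]; split_ifs with h
    · norm_num
    · exact (div_le_one (lt_of_le_of_ne hT0 (Ne.symm h))).mpr hβT
  have hcT : c * T = β := by
    rw [hcdef]; split_ifs with h
    · rw [h, mul_zero]
      have : T = 0 := h
      linarith [hβT, hβ0, this ▸ hβT]
    · exact div_mul_cancel₀ β h
  set w' : ι → ℝ := fun i => if i ∈ S then c * w i else 0 with hw'def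
  have hw'0 : ∀ i, 0 ≤ w' i := by
    intro i; rw [hw'def]; dsimp only; split_ifs with h
    · exact mul_nonneg hc0 (hw0 i (hSsub h))
    · exact le_rfl
  have hw'le : ∀ i ∈ t, w' i ≤ w i := by
    intro i hi; rw [hw'def]; dsimp only; split_ifs with h
    · calc c * w i ≤ 1 * w i := mul_le_mul_of_nonneg_right hc1 (hw0 i hi)
        _ = w i := one_mul _
    · exact hw0 i hi
  have hw'sum : ∑ i ∈ t, w' i = β := by
    rw [hw'def]
    rw [Finset.sum_ite_mem]
    rw [Finset.inter_eq_right.mpr hSsub]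
    rw [← Finset.mul_sum, ← hTdef, hcT]
  -- z i e₀ = 0 for good i
  have hze₀ : ∀ i ∈ S, z i e₀ = 0 := by
    intro i hi
    obtain ⟨hit, hP⟩ := Finset.mem_filter.mp hi
    rw [hzval i hit, if_neg]
    intro hmem
    exact hP u hu e₀.1 hmem hu
  -- the indicator of e₀'s coordinate
  set δ : {e : Sym2 V // e ∈ G.edgeFinset} → ℝ := fun e => if e = e₀ then 1 else 0 with hδdef
  -- the new combination
  set Z : ι × Bool → ({e : Sym2 V // e ∈ G.edgeFinset} → ℝ) :=
    fun p => if p.2 = true ∧ p.1 ∈ S then z p.1 + δ else z p.1 with hZdef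
  set W : ι × Bool → ℝ := fun p => if p.2 = true then w' p.1 else w p.1 - w' p.1 with hWdef
  have hWsum : ∑ p ∈ t ×ˢ (univ : Finset Bool), W p = 1 := by
    rw [Finset.sum_product]
    have : ∀ i ∈ t, ∑ b : Bool, W (i, b) = w i := by
      intro i hi
      rw [Fintype.sum_bool]
      simp only [hWdef]
      norm_num
    rw [Finset.sum_congr rfl this, hw1]
  have hW0 : ∀ p ∈ t ×ˢ (univ : Finset Bool), 0 ≤ W p := by
    rintro ⟨i, b⟩ hp
    have hi : i ∈ t := (Finset.mem_product.mp hp).1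
    rw [hWdef]; dsimp only; split_ifs
    · exact hw'0 i
    · linarith [hw'le i hi]
  have hZmem : ∀ p ∈ t ×ˢ (univ : Finset Bool),
      Z p ∈ {χ : {e : Sym2 V // e ∈ G.edgeFinset} → ℝ |
        ∃ M : Finset (Sym2 V), M ⊆ G.edgeFinset ∧
          (∀ e ∈ M, ∀ f ∈ M, e ≠ f → ∀ w : V, w ∈ e → w ∉ f) ∧
          χ = fun e => if e.1 ∈ M then 1 else 0} := by
    rintro ⟨i, b⟩ hp
    have hi : i ∈ t := (Finset.mem_product.mp hp).1
    rw [hZdef]; dsimp only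
    split_ifs with hcond
    · obtain ⟨-, hiS⟩ := hcond
      have hP := (Finset.mem_filter.mp hiS).2
      refine ⟨insert e₀.1 (M i), ?_, ?_, ?_⟩
      · exact Finset.insert_subset e₀.2 (hMsub i hi)
      · intro e he f hf hne a hae
        rcases Finset.mem_insert.mp he with rfl | heM
        · rcases Finset.mem_insert.mp hf with rfl | hfM
          · exact absurd rfl hne
          · exact hP a hae f hfM
        · rcases Finset.mem_insert.mp hf with rfl | hfM
          · intro haf
            exact hP a haf e heM hae
          · exact hMmatch i hi e heM f hfM hne a hae
      · funext e
        by_cases he : e = e₀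
        · have hnot : e₀.1 ∉ M i := fun hmem => hP u hu e₀.1 hmem hu
          simp [Pi.add_apply, hzval i hi, hδdef, he, hnot]
        · have hne1 : e.1 ≠ e₀.1 := fun h => he (Subtype.ext h)
          simp [Pi.add_apply, hzval i hi, hδdef, he, Finset.mem_insert, hne1]
    · exact ⟨M i, hMsub i hi, hMmatch i hi, hMind i hi⟩
  have hkey : (t ×ˢ (univ : Finset Bool)).centerMass W Z = fun e => α * x e := by
    rw [Finset.centerMass_eq_of_sum_1 _ Z hWsum, Finset.sum_product]
    have hterm : ∀ i ∈ t, (∑ b : Bool, W (i, b) • Z (i, b)) = w i • z i + w' i • δ := by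
      intro i hi
      rw [Fintype.sum_bool]
      by_cases hiS : i ∈ S
      · simp only [hWdef, hZdef]
        simp only [hiS, and_true, if_true, if_pos rfl, reduceIte, Bool.false_eq_true, false_and, if_false]
        rw [smul_add, sub_smul]
        abel
      · have hwi0 : w' i = 0 := by rw [hw'def]; exact if_neg hiS
        simp only [hWdef, hZdef]
        simp only [hiS, and_false, if_false, reduceIte, Bool.false_eq_true, false_and, and_true]
        rw [hwi0]
        simp
    rw [Finset.sum_congr rfl hterm, Finset.sum_add_distrib]
    have h1 : ∑ i ∈ t, w i • z i = fun e => α * xbar e :=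
      (t.centerMass_eq_of_sum_1 z hw1).symm.trans hcm
    have h2 : ∑ i ∈ t, w' i • δ = β • δ := by rw [← Finset.sum_smul, hw'sum]
    rw [h1, h2]
    funext e
    by_cases he : e = e₀
    · rw [he]
      simp [hδdef, hxbar0, hβdef]
    · simp only [Pi.add_apply, Pi.smul_apply, hδdef, if_neg he, smul_eq_mul, mul_zero, add_zero,
        hxbar e he]
  exact hkey ▸ Finset.centerMass_mem_convexHull _ hW0 (by rw [hWsum]; norm_num) hZmem
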